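/- arXiv:2407.21294 — 3 statements merged into one kernel-verified Lean document; each statement's English description precedes it below -/
import Mathlib

section
/- Let x be a mixed Nash equilibrium of the stable matching game in which every woman receives at least one fractional proposal (for every w ∈ W there exists m with x_{mw} > 0). For each man m, let w_m be the least preferred woman among those he fractionally proposes to, i.e., w_m = argmin_{w∈W} {μ_{mw} : x_{mw} > 0}. Then {(m, w_m) : m ∈ M} is a stable matching, and hence its characteristic vector is a pure Nash equilibrium of the stable matching game. -/
open Finset Real MeasureTheory

namespace SM

variable {n : ℕ}

/-- The set of men that woman `w` strictly prefers to man `m`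
(`rankW w k` is woman `w`'s cardinal ranking score of man `k`;
`k >_w m` iff `rankW w m < rankW w k`). -/
noncomputable def better (rankW : Fin n → Fin n → ℝ) (w m : Fin n) : Finset (Fin n) :=
  Finset.univ.filter fun k => rankW w m < rankW w k

/-- Market assumptions: men's cardinal preferences lie in `(0,1]` with no ties, and each
woman's ranking of the men is strict (injective scores). -/
def MarketHyp (μp rankW : Fin n → Fin n → ℝ) : Prop :=
  (∀ m w, μp m w ∈ Set.Ioc (0:ℝ) 1) ∧
  (∀ m w w', w ≠ w' → μp m w ≠ μp m w') ∧
  (∀ w, Function.Injective (rankW w))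

/-- `v_{mw}(x) = μ_{mw} ∏_{k >_w m} (1 - x_{kw})`. -/
noncomputable def vv (μp rankW : Fin n → Fin n → ℝ) (x : Fin n → Fin n → ℝ) (m w : Fin n) : ℝ :=
  μp m w * ∏ k ∈ better rankW w m, (1 - x k w)

/-- Payoff `u_m(x) = ∑_w v_{mw}(x) x_{mw}` of man `m` in the stable matching game. -/
noncomputable def uu (μp rankW : Fin n → Fin n → ℝ) (x : Fin n → Fin n → ℝ) (m : Fin n) : ℝ :=
  ∑ w, vv μp rankW x m w * x m w

/-- Mixed strategy: a probability vector over the women. -/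
def IsStrategy (y : Fin n → ℝ) : Prop := (∀ w, 0 ≤ y w) ∧ ∑ w, y w = 1

/-- Pure strategy: the indicator vector of a single woman. -/
def IsPure (y : Fin n → ℝ) : Prop := ∃ w₀, y = fun w => if w = w₀ then (1:ℝ) else 0

/-- (Mixed) Nash equilibrium of the stable matching game. -/
def IsNE (μp rankW : Fin n → Fin n → ℝ) (x : Fin n → Fin n → ℝ) : Prop :=
  (∀ m, IsStrategy (x m)) ∧
  ∀ m y, IsStrategy y → uu μp rankW (Function.update x m y) m ≤ uu μp rankW x m

/-- Pure Nash equilibrium of the stable matching game. -/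
def IsPureNE (μp rankW : Fin n → Fin n → ℝ) (x : Fin n → Fin n → ℝ) : Prop :=
  (∀ m, IsPure (x m)) ∧
  ∀ m y, IsPure y → uu μp rankW (Function.update x m y) m ≤ uu μp rankW x m

/-- Characteristic vector of the perfect matching `σ`. -/
def charVec (σ : Equiv.Perm (Fin n)) : Fin n → Fin n → ℝ :=
  fun m w => if w = σ m then 1 else 0

/-- A perfect matching `σ` is stable iff it admits no blocking pair `(m, σ m')`. -/
def IsStableMatching (μp rankW : Fin n → Fin n → ℝ) (σ : Equiv.Perm (Fin n)) : Prop :=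
  ¬ ∃ m m' : Fin n, m ≠ m' ∧ μp m (σ m) < μp m (σ m') ∧ rankW (σ m') m' < rankW (σ m') m

/-- `Δ = min_{m, w ≠ w'} |μ_{mw} - μ_{mw'}|`. -/
noncomputable def gapDelta (μp : Fin n → Fin n → ℝ) : ℝ :=
  sInf {d : ℝ | ∃ m w w' : Fin n, w ≠ w' ∧ d = |μp m w - μp m w'|}

/-- `μ_min = min_{m,w} μ_{mw}`. -/
noncomputable def muMin (μp : Fin n → Fin n → ℝ) : ℝ :=
  sInf {a : ℝ | ∃ m w : Fin n, a = μp m w}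

/-- `μ_max = max_{m,w} μ_{mw}`. -/
noncomputable def muMax (μp : Fin n → Fin n → ℝ) : ℝ :=
  sSup {a : ℝ | ∃ m w : Fin n, a = μp m w}

/-- Entrywise ℓ¹ distance on strategy profiles. -/
noncomputable def l1dist (x y : Fin n → Fin n → ℝ) : ℝ :=
  ∑ m, ∑ w, |x m w - y m w|

/-- The logit (exponential-weights) map. -/
noncomputable def logit (η : ℝ) (L : Fin n → ℝ) (w : Fin n) : ℝ :=
  Real.exp (η * L w) / ∑ w', Real.exp (η * L w')

lemma vv_update (μp rankW : Fin n → Fin n → ℝ) (x : Fin n → Fin n → ℝ)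
    (m : Fin n) (y : Fin n → ℝ) (w : Fin n) :
    vv μp rankW (Function.update x m y) m w = vv μp rankW x m w := by
  unfold vv
  congr 1
  refine Finset.prod_congr rfl fun k hk => ?_
  have hkm : k ≠ m := by
    simp only [better, Finset.mem_filter] at hk
    intro h; subst h; exact lt_irrefl _ hk.2
  rw [Function.update_of_ne hkm]

lemma pure_isStrategy (w₀ : Fin n) :
    IsStrategy (fun w : Fin n => if w = w₀ then (1:ℝ) else 0) := by
  constructor
  · intro w; dsimp only; split_ifs <;> norm_num
  · simp

lemma uu_pure (μp rankW : Fin n → Fin n → ℝ) (x : Fin n → Fin n → ℝ) (m w₀ : Fin n) :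
    uu μp rankW (Function.update x m (fun w => if w = w₀ then (1:ℝ) else 0)) m
      = vv μp rankW x m w₀ := by
  unfold uu
  have h1 : ∀ w, vv μp rankW (Function.update x m (fun w => if w = w₀ then (1:ℝ) else 0)) m w
      = vv μp rankW x m w := vv_update μp rankW x m _
  simp only [h1, Function.update_self, mul_ite, mul_one, mul_zero]
  simp

/-- Theorem 2: rounding a mixed NE in which every woman receives a fractional
proposal, by matching each man to his least preferred woman in his support, yields a
stable matching, whose characteristic vector is a pure NE. -/
theorem mixed_NE_rounding {n : ℕ} (μp rankW : Fin n → Fin n → ℝ)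
    (hM : MarketHyp μp rankW)
    (x : Fin n → Fin n → ℝ) (hNE : IsNE μp rankW x)
    (hfull : ∀ w : Fin n, ∃ m, 0 < x m w)
    (wm : Fin n → Fin n)
    (hwm : ∀ m, 0 < x m (wm m) ∧ ∀ w, 0 < x m w → μp m (wm m) ≤ μp m w) :
    ∃ σ : Equiv.Perm (Fin n), (∀ m, σ m = wm m) ∧ IsStableMatching μp rankW σ ∧
      IsPureNE μp rankW (charVec σ) := by
  obtain ⟨hμ, hties, hrinj⟩ := hM
  obtain ⟨hstr, hbr⟩ := hNE
  -- deviation bound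
  have hdev : ∀ m w₀, vv μp rankW x m w₀ ≤ uu μp rankW x m := by
    intro m w₀
    have := hbr m _ (pure_isStrategy w₀)
    rwa [uu_pure] at this
  -- support lemma
  have hsupp : ∀ m w₀, 0 < x m w₀ → vv μp rankW x m w₀ = uu μp rankW x m := by
    intro m w₀ hx
    refine le_antisymm (hdev m w₀) ?_
    by_contra hlt
    push_neg at hlt
    have hS : uu μp rankW x m < uu μp rankW x m := by
      have h1 : ∑ w, vv μp rankW x m w * x m w < ∑ w, uu μp rankW x m * x m w := by
        refine Finset.sum_lt_sum (fun w _ => ?_) ⟨w₀, Finset.mem_univ _, ?_⟩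
        · exact mul_le_mul_of_nonneg_right (hdev m w) ((hstr m).1 w)
        · exact mul_lt_mul_of_pos_right hlt hx
      calc uu μp rankW x m = ∑ w, vv μp rankW x m w * x m w := rfl
        _ < ∑ w, uu μp rankW x m * x m w := h1
        _ = uu μp rankW x m * ∑ w, x m w := by rw [Finset.mul_sum]
        _ = uu μp rankW x m := by rw [(hstr m).2, mul_one]
    exact lt_irrefl _ hS
  have hxle1 : ∀ m w, x m w ≤ 1 := by
    intro m w
    have := Finset.single_le_sum (f := x m) (fun i _ => (hstr m).1 i) (Finset.mem_univ w)
    rwa [(hstr m).2] at this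
  have hvle : ∀ m w, vv μp rankW x m w ≤ μp m w := by
    intro m w
    refine mul_le_of_le_one_right (hμ m w).1.le ?_
    exact Finset.prod_le_one (fun k _ => by linarith [hxle1 k w]) (fun k _ => by linarith [(hstr k).1 w])
  -- for each woman, her favorite proposer m* satisfies wm m* = w
  have htop : ∀ w : Fin n, ∃ ms, 0 < x ms w ∧ (∀ k, rankW w ms < rankW w k → x k w = 0)
      ∧ wm ms = w := by
    intro w
    obtain ⟨m0, hm0⟩ := hfull w
    obtain ⟨ms, hms, hmax⟩ := Finset.exists_max_image
      (Finset.univ.filter fun m => 0 < x m w) (rankW w)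
      ⟨m0, Finset.mem_filter.mpr ⟨Finset.mem_univ _, hm0⟩⟩
    have hmsx : 0 < x ms w := (Finset.mem_filter.mp hms).2
    have hzero : ∀ k, rankW w ms < rankW w k → x k w = 0 := by
      intro k hk
      by_contra hne
      have hpos : 0 < x k w := lt_of_le_of_ne ((hstr k).1 w) (Ne.symm hne)
      have := hmax k (Finset.mem_filter.mpr ⟨Finset.mem_univ _, hpos⟩)
      exact absurd hk (not_lt.mpr this)
    refine ⟨ms, hmsx, hzero, ?_⟩
    by_contra hne
    have hprod : ∏ k ∈ better rankW w ms, (1 - x k w) = 1 := by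
      refine Finset.prod_eq_one fun k hk => ?_
      simp only [better, Finset.mem_filter] at hk
      rw [hzero k hk.2]; ring
    have hvw : vv μp rankW x ms w = μp ms w := by
      unfold vv; rw [hprod, mul_one]
    have hμlt : μp ms (wm ms) < μp ms w :=
      lt_of_le_of_ne ((hwm ms).2 w hmsx) (hties ms (wm ms) w hne)
    have h1 : μp ms w = uu μp rankW x ms := by rw [← hvw]; exact hsupp ms w hmsx
    have h2 : uu μp rankW x ms ≤ μp ms (wm ms) := by
      rw [← hsupp ms (wm ms) (hwm ms).1]; exact hvle ms (wm ms)
    linarith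
  have hsurj : Function.Surjective wm := by
    intro w; obtain ⟨ms, _, _, h⟩ := htop w; exact ⟨ms, h⟩
  have hinj : Function.Injective wm := Finite.injective_iff_surjective.mpr hsurj
  -- key: each man is the top proposer of his own wm
  have hkey : ∀ m k, rankW (wm m) m < rankW (wm m) k → x k (wm m) = 0 := by
    intro m k hk
    obtain ⟨ms, _, hz, heq⟩ := htop (wm m)
    have : ms = m := hinj heq
    subst this
    exact hz k hk
  set σ : Equiv.Perm (Fin n) := Equiv.ofBijective wm ⟨hinj, hsurj⟩ with hσ
  have hσapp : ∀ m, σ m = wm m := fun m => rfl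
  -- stability
  have hstab : IsStableMatching μp rankW σ := by
    rintro ⟨m, m', hne, hμlt, hrlt⟩
    rw [hσapp, hσapp] at hμlt
    rw [hσapp] at hrlt
    have hprod : ∏ k ∈ better rankW (wm m') m, (1 - x k (wm m')) = 1 := by
      refine Finset.prod_eq_one fun k hk => ?_
      simp only [better, Finset.mem_filter] at hk
      rw [hkey m' k (lt_trans hrlt hk.2)]; ring
    have hv : vv μp rankW x m (wm m') = μp m (wm m') := by
      unfold vv; rw [hprod, mul_one]
    have h1 : vv μp rankW x m (wm m') ≤ uu μp rankW x m := hdev m (wm m')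
    have h2 : uu μp rankW x m ≤ μp m (wm m) := by
      rw [← hsupp m (wm m) (hwm m).1]; exact hvle m (wm m)
    rw [hv] at h1
    linarith
  refine ⟨σ, hσapp, hstab, ?_, ?_⟩
  · intro m; exact ⟨σ m, rfl⟩
  · rintro m y ⟨w₀, rfl⟩
    rw [uu_pure]
    -- value of the charVec profile for m at his own match
    have hprod_self : ∀ m' : Fin n,
        ∏ k ∈ better rankW (σ m') m', (1 - charVec σ k (σ m')) = 1 := by
      intro m'
      refine Finset.prod_eq_one fun k hk => ?_
      simp only [better, Finset.mem_filter] at hk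
      have hkm : k ≠ m' := fun h => by subst h; exact lt_irrefl _ hk.2
      have : charVec σ k (σ m') = 0 := by
        simp only [charVec, if_neg (fun h : σ m' = σ k => hkm (σ.injective h.symm))]
      rw [this]; ring
    have huu : uu μp rankW (charVec σ) m = μp m (σ m) := by
      have h0 := uu_pure μp rankW (charVec σ) m (σ m)
      have hupd : Function.update (charVec σ) m (fun w => if w = σ m then (1:ℝ) else 0)
          = charVec σ := by
        have : (fun w => if w = σ m then (1:ℝ) else 0) = charVec σ m := rfl
        rw [this, Function.update_eq_self]
      rw [hupd] at h0
      rw [h0]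
      unfold vv; rw [hprod_self m, mul_one]
    rw [huu]
    -- bound the deviation value
    set m₀ := σ.symm w₀ with hm₀
    have hw₀ : σ m₀ = w₀ := σ.apply_symm_apply w₀
    by_cases hmm : m₀ = m
    · subst hmm
      rw [← hw₀]
      unfold vv; rw [hprod_self m₀, mul_one]
    · have hrne : rankW w₀ m ≠ rankW w₀ m₀ := fun h => hmm (hrinj w₀ h.symm)
      rcases lt_or_gt_of_ne hrne with hlt | hgt
      · -- m₀ is better than m for w₀ : product is 0
        have hmem : m₀ ∈ better rankW w₀ m := by
          simp only [better, Finset.mem_filter]; exact ⟨Finset.mem_univ _, hlt⟩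
        have : vv μp rankW (charVec σ) m w₀ = 0 := by
          unfold vv
          rw [Finset.prod_eq_zero hmem (by simp [charVec, hw₀.symm]), mul_zero]
        rw [this]; exact (hμ m (σ m)).1.le
      · -- m is better than m₀ : product is 1, use stability
        have hprod : ∏ k ∈ better rankW w₀ m, (1 - charVec σ k w₀) = 1 := by
          refine Finset.prod_eq_one fun k hk => ?_
          simp only [better, Finset.mem_filter] at hk
          have hkm₀ : k ≠ m₀ := by
            intro h; subst h; exact absurd hk.2 (not_lt.mpr (le_of_lt hgt))
          have : charVec σ k w₀ = 0 := by
            simp only [charVec]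
            rw [if_neg]
            intro h
            exact hkm₀ (σ.injective (by rw [← h, hw₀]))
          rw [this]; ring
        have hv : vv μp rankW (charVec σ) m w₀ = μp m w₀ := by
          unfold vv; rw [hprod, mul_one]
        rw [hv]
        by_contra hle
        push_neg at hle
        exact hstab ⟨m, m₀, fun h => hmm h.symm, by rw [hw₀]; exact hle, by rw [hw₀]; exact hgt⟩

end SM
end

section
/- The stable matching game is weakly acyclic: from every pure strategy profile x^0 there exists a finite better-response path ending at a pure Nash equilibrium; moreover, such a path of length at most |M|·|W| + |M|² always exists. -/
open Finset Real MeasureTheory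

namespace SM

variable {n : ℕ}

/-- The strategy profile of indicator vectors associated with the action profile `a`
(man `m` proposes to woman `a m`). -/
def pureProfile (a : Fin n → Fin n) : Fin n → Fin n → ℝ := fun m w => if w = a m then 1 else 0

/-- Payoff of man `m` at the pure action profile `a`. -/
noncomputable def uP (μp rankW : Fin n → Fin n → ℝ) (a : Fin n → Fin n) (m : Fin n) : ℝ :=
  uu μp rankW (pureProfile a) m

/-- Man `m` is playing a (pure) best response at the action profile `a`. -/
def IsBR (μp rankW : Fin n → Fin n → ℝ) (a : Fin n → Fin n) (m : Fin n) : Prop :=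
  ∀ w : Fin n, uP μp rankW (Function.update a m w) m ≤ uP μp rankW a m

/-- Pure Nash equilibrium of the pure-action stable matching game. -/
def IsPureNEAction (μp rankW : Fin n → Fin n → ℝ) (a : Fin n → Fin n) : Prop :=
  ∀ m, IsBR μp rankW a m

/-- Man `m` is matched at `a`: no man more preferred by woman `a m` also proposes to her. -/
def MatchedIn (rankW : Fin n → Fin n → ℝ) (a : Fin n → Fin n) (m : Fin n) : Prop :=
  ∀ k ∈ better rankW (a m) m, a k ≠ a m

/-- Good state: every matched man is at his best response. -/
def GoodState (μp rankW : Fin n → Fin n → ℝ) (a : Fin n → Fin n) : Prop :=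
  ∀ m, MatchedIn rankW a m → IsBR μp rankW a m

-- ===================== auxiliary development =====================

open scoped Classical

section Aux

variable (μp rankW : Fin n → Fin n → ℝ)

lemma mem_better_iff {w m k : Fin n} : k ∈ better rankW w m ↔ rankW w m < rankW w k := by
  simp [better]

lemma notMem_better_self (w m : Fin n) : m ∉ better rankW w m := by
  simp [better]

/-- `m` would win woman `w`, given the other men's proposals in `a`. -/
def Can (a : Fin n → Fin n) (m w : Fin n) : Prop :=
  ∀ k ∈ better rankW w m, k ≠ m → a k ≠ w

lemma uP_formula (a : Fin n → Fin n) (m : Fin n) :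
    uP μp rankW a m
      = μp m (a m) * ∏ k ∈ better rankW (a m) m, (1 - if a m = a k then (1:ℝ) else 0) := by
  unfold uP uu vv pureProfile
  rw [Finset.sum_eq_single (a m)]
  · simp
  · intro w' _ hne
    simp [hne]
  · intro h
    exact absurd (Finset.mem_univ _) h

lemma matchedIn_iff_can (a : Fin n → Fin n) (m : Fin n) :
    MatchedIn rankW a m ↔ Can rankW a m (a m) := by
  constructor
  · intro h k hk _
    exact h k hk
  · intro h k hk
    have hkm : k ≠ m := by
      rintro rfl
      exact absurd ((mem_better_iff rankW).mp hk) (lt_irrefl _)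
    exact h k hk hkm

lemma uP_of_matched (a : Fin n → Fin n) (m : Fin n) (h : MatchedIn rankW a m) :
    uP μp rankW a m = μp m (a m) := by
  rw [uP_formula, Finset.prod_eq_one, mul_one]
  intro k hk
  rw [if_neg (fun he => h k hk he.symm), sub_zero]

lemma uP_of_unmatched (a : Fin n → Fin n) (m : Fin n) (h : ¬ MatchedIn rankW a m) :
    uP μp rankW a m = 0 := by
  unfold MatchedIn at h
  push_neg at h
  obtain ⟨k, hk, he⟩ := h
  rw [uP_formula, Finset.prod_eq_zero hk, mul_zero]
  rw [if_pos he.symm]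
  ring

lemma matchedIn_update_iff (a : Fin n → Fin n) (m w : Fin n) :
    MatchedIn rankW (Function.update a m w) m ↔ Can rankW a m w := by
  unfold MatchedIn Can
  rw [Function.update_self]
  constructor
  · intro h k hk hkm
    have := h k hk
    rwa [Function.update_of_ne hkm] at this
  · intro h k hk
    rcases eq_or_ne k m with rfl | hkm
    · exact absurd ((mem_better_iff rankW).mp hk) (lt_irrefl _)
    · rw [Function.update_of_ne hkm]
      exact h k hk hkm

lemma uP_update_of_can (a : Fin n → Fin n) (m w : Fin n) (h : Can rankW a m w) :
    uP μp rankW (Function.update a m w) m = μp m w := by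
  have := uP_of_matched μp rankW (Function.update a m w) m
      ((matchedIn_update_iff rankW a m w).mpr h)
  rwa [Function.update_self] at this

lemma uP_update_of_not_can (a : Fin n → Fin n) (m w : Fin n) (h : ¬ Can rankW a m w) :
    uP μp rankW (Function.update a m w) m = 0 :=
  uP_of_unmatched μp rankW _ m (fun hm => h ((matchedIn_update_iff rankW a m w).mp hm))

lemma uP_nonneg (hM : MarketHyp μp rankW) (a : Fin n → Fin n) (m : Fin n) :
    0 ≤ uP μp rankW a m := by
  by_cases h : MatchedIn rankW a m
  · rw [uP_of_matched μp rankW a m h]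
    exact le_of_lt (hM.1 m (a m)).1
  · rw [uP_of_unmatched μp rankW a m h]

lemma matched_unique (hM : MarketHyp μp rankW) {a : Fin n → Fin n} {p q : Fin n}
    (hp : MatchedIn rankW a p) (hq : MatchedIn rankW a q) (hpq : a p = a q) : p = q := by
  by_contra hne
  rcases lt_trichotomy (rankW (a p) p) (rankW (a p) q) with h | h | h
  · exact hp q ((mem_better_iff rankW).mpr h) hpq.symm
  · exact hne (hM.2.2 (a p) h)
  · refine hq p ((mem_better_iff rankW).mpr ?_) hpq
    rw [← hpq]
    exact h

lemma card_better_lt (w m : Fin n) : (better rankW w m).card < n := by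
  have hn : 0 < n := Nat.pos_of_ne_zero (fun h => by subst h; exact m.elim0)
  have h1 : (better rankW w m).card ≤ (Finset.univ.erase m).card := by
    refine Finset.card_le_card (fun k hk => Finset.mem_erase.mpr ⟨?_, Finset.mem_univ _⟩)
    rintro rfl
    exact absurd ((mem_better_iff rankW).mp hk) (lt_irrefl _)
  have h2 : (Finset.univ.erase m).card = n - 1 := by
    rw [Finset.card_erase_of_mem (Finset.mem_univ m), Finset.card_univ, Fintype.card_fin]
  omega

lemma card_better_le (w m : Fin n) : (better rankW w m).card ≤ n := by
  have := Finset.card_le_univ (better rankW w m)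
  rwa [Fintype.card_fin] at this

lemma can_key (a : Fin n → Fin n) (m w' : Fin n) (hunm : ¬ MatchedIn rankW a m)
    {p : Fin n} (hp : p ≠ m) (w : Fin n)
    (h : Can rankW (Function.update a m w') p w) : Can rankW a p w := by
  obtain ⟨q, hq_mem, hq_eq⟩ : ∃ q ∈ better rankW (a m) m, a q = a m := by
    unfold MatchedIn at hunm
    push_neg at hunm
    exact hunm
  intro k hk hkp
  rcases eq_or_ne k m with rfl | hkm
  · intro hamw
    rw [mem_better_iff] at hk
    rw [mem_better_iff] at hq_mem
    rw [hamw] at hq_mem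
    have hqp : q ∈ better rankW w p := (mem_better_iff rankW).mpr (lt_trans hk hq_mem)
    have hqp' : q ≠ p := by
      rintro rfl
      exact absurd ((mem_better_iff rankW).mp hqp) (lt_irrefl _)
    have hqm : q ≠ k := by
      rintro rfl
      exact absurd hq_mem (lt_irrefl _)
    have hq := h q hqp hqp'
    rw [Function.update_of_ne hqm] at hq
    rw [hq_eq, hamw] at hq
    exact hq rfl
  · have := h k hk hkp
    rwa [Function.update_of_ne hkm] at this

/-- Phase-2 potential: total "rank position" of matched men at their women. -/
noncomputable def posScore (a : Fin n → Fin n) : ℕ :=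
  ∑ p ∈ Finset.univ.filter (fun p => MatchedIn rankW a p), (n - (better rankW (a p) p).card)

/-- Phase-1 potential: total number of women weakly below each man's current proposal. -/
noncomputable def lw (a : Fin n → Fin n) : ℕ :=
  ∑ p : Fin n, (Finset.univ.filter (fun w => μp p w ≤ μp p (a p))).card

lemma posScore_le (a : Fin n → Fin n) : posScore rankW a ≤ n * n := by
  calc posScore rankW a
      ≤ (Finset.univ.filter (fun p => MatchedIn rankW a p)).card • n := by
        refine Finset.sum_le_card_nsmul _ _ _ (fun p _ => ?_)
        exact Nat.sub_le _ _
    _ ≤ n * n := by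
        rw [smul_eq_mul]
        refine Nat.mul_le_mul_right _ ?_
        have := Finset.card_filter_le Finset.univ (fun p => MatchedIn rankW a p)
        rwa [Finset.card_univ, Fintype.card_fin] at this

lemma lw_le (a : Fin n → Fin n) : lw μp a ≤ n * n := by
  calc lw μp a
      ≤ (Finset.univ : Finset (Fin n)).card • n := by
        refine Finset.sum_le_card_nsmul _ _ _ (fun p _ => ?_)
        have := Finset.card_filter_le Finset.univ (fun w => μp p w ≤ μp p (a p))
        rwa [Finset.card_univ, Fintype.card_fin] at this
    _ ≤ n * n := by
        rw [smul_eq_mul, Finset.card_univ, Fintype.card_fin]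

end Aux


section Steps

variable (μp rankW : Fin n → Fin n → ℝ)

/-- Phase-1 step: a matched man not at his best response best-responds. -/
lemma step1 (hM : MarketHyp μp rankW) (a : Fin n → Fin n) (m : Fin n)
    (hmat : MatchedIn rankW a m) (hnbr : ¬ IsBR μp rankW a m) :
    ∃ a' : Fin n → Fin n, (∀ j, j ≠ m → a' j = a j) ∧
      uP μp rankW a m < uP μp rankW a' m ∧
      lw μp a + 1 ≤ lw μp a' := by
  unfold IsBR at hnbr
  push_neg at hnbr
  obtain ⟨w₁, hw₁⟩ := hnbr
  obtain ⟨ws, -, hmax⟩ := Finset.exists_max_image Finset.univ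
      (fun w => uP μp rankW (Function.update a m w) m) ⟨m, Finset.mem_univ m⟩
  refine ⟨Function.update a m ws, fun j hj => Function.update_of_ne hj _ _, ?_, ?_⟩
  · exact lt_of_lt_of_le hw₁ (hmax w₁ (Finset.mem_univ _))
  · -- potential increase
    have himp : uP μp rankW a m < uP μp rankW (Function.update a m ws) m :=
      lt_of_lt_of_le hw₁ (hmax w₁ (Finset.mem_univ _))
    have h0 : uP μp rankW a m = μp m (a m) := uP_of_matched μp rankW a m hmat
    have hpos : 0 < uP μp rankW (Function.update a m ws) m :=
      lt_of_le_of_lt (le_of_lt (hM.1 m (a m)).1) (h0 ▸ himp)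
    have hcan : Can rankW a m ws := by
      by_contra hc
      rw [uP_update_of_not_can μp rankW a m ws hc] at hpos
      exact lt_irrefl _ hpos
    have hval : uP μp rankW (Function.update a m ws) m = μp m ws :=
      uP_update_of_can μp rankW a m ws hcan
    have hlt : μp m (a m) < μp m ws := by
      rw [h0, hval] at himp
      exact himp
    unfold lw
    have hstrict : (Finset.univ.filter (fun w => μp m w ≤ μp m (a m))).card
        < (Finset.univ.filter (fun w => μp m w ≤ μp m (Function.update a m ws m))).card := by
      rw [Function.update_self]
      have hsub : (Finset.univ.filter (fun w => μp m w ≤ μp m (a m)))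
          ⊆ (Finset.univ.filter (fun w => μp m w ≤ μp m ws)) := by
        intro w hw
        rw [Finset.mem_filter] at hw ⊢
        exact ⟨hw.1, le_of_lt (lt_of_le_of_lt hw.2 hlt)⟩
      refine Finset.card_lt_card ((Finset.ssubset_iff_of_subset hsub).mpr ⟨ws, ?_, ?_⟩)
      · exact Finset.mem_filter.mpr ⟨Finset.mem_univ ws, le_refl _⟩
      · intro hmem
        rw [Finset.mem_filter] at hmem
        exact absurd hmem.2 (not_le.mpr hlt)
    have hle : ∀ p ∈ Finset.univ, (Finset.univ.filter (fun w => μp p w ≤ μp p (a p))).card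
        ≤ (Finset.univ.filter (fun w => μp p w ≤ μp p (Function.update a m ws p))).card := by
      intro p _
      rcases eq_or_ne p m with rfl | hpm
      · exact le_of_lt hstrict
      · rw [Function.update_of_ne hpm]
    have := Finset.sum_lt_sum hle ⟨m, Finset.mem_univ m, hstrict⟩
    omega

/-- Phase-2 step: in a good state, an unmatched man not at his best response
best-responds; the state stays good and the score increases. -/
lemma step2 (hM : MarketHyp μp rankW) (a : Fin n → Fin n) (m : Fin n)
    (hgood : GoodState μp rankW a) (hunm : ¬ MatchedIn rankW a m)
    (hnbr : ¬ IsBR μp rankW a m) :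
    ∃ a' : Fin n → Fin n, (∀ j, j ≠ m → a' j = a j) ∧
      uP μp rankW a m < uP μp rankW a' m ∧
      GoodState μp rankW a' ∧
      posScore rankW a + 1 ≤ posScore rankW a' := by
  unfold IsBR at hnbr
  push_neg at hnbr
  obtain ⟨w₁, hw₁⟩ := hnbr
  obtain ⟨ws, -, hmax⟩ := Finset.exists_max_image Finset.univ
      (fun w => uP μp rankW (Function.update a m w) m) ⟨m, Finset.mem_univ m⟩
  set a' := Function.update a m ws with ha'
  have hup : ∀ j, j ≠ m → a' j = a j := fun j hj => Function.update_of_ne hj _ _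
  have ham' : a' m = ws := Function.update_self _ _ _
  have h0 : uP μp rankW a m = 0 := uP_of_unmatched μp rankW a m hunm
  have himp : uP μp rankW a m < uP μp rankW a' m :=
    lt_of_lt_of_le hw₁ (hmax w₁ (Finset.mem_univ _))
  have hpos : 0 < uP μp rankW a' m := h0 ▸ himp
  have hcan : Can rankW a m ws := by
    by_contra hc
    rw [ha', uP_update_of_not_can μp rankW a m ws hc] at hpos
    exact lt_irrefl _ hpos
  have hmm' : MatchedIn rankW a' m := (matchedIn_update_iff rankW a m ws).mpr hcan
  have hprev : ∀ p, p ≠ m → ∀ w, Can rankW a' p w → Can rankW a p w :=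
    fun p hp w h => can_key rankW a m ws hunm hp w h
  have hmb : ∀ p, p ≠ m → MatchedIn rankW a' p → MatchedIn rankW a p := by
    intro p hp h
    rw [matchedIn_iff_can] at h ⊢
    rw [hup p hp] at h
    exact hprev p hp _ h
  -- goodness is preserved
  have hgood' : GoodState μp rankW a' := by
    intro p hp
    rcases eq_or_ne p m with rfl | hpm
    · intro w
      have he : Function.update a' p w = Function.update a p w := by
        rw [ha', Function.update_idem]
      rw [he]
      exact hmax w (Finset.mem_univ w)
    · have hmatch : MatchedIn rankW a p := hmb p hpm hp
      have hbr0 := hgood p hmatch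
      intro w
      have hupm : uP μp rankW a' p = uP μp rankW a p := by
        rw [uP_of_matched μp rankW _ _ hp, uP_of_matched μp rankW _ _ hmatch, hup p hpm]
      by_cases hc : Can rankW a' p w
      · have hc2 : Can rankW a p w := hprev p hpm w hc
        rw [uP_update_of_can μp rankW a' p w hc, ← uP_update_of_can μp rankW a p w hc2, hupm]
        exact hbr0 w
      · rw [uP_update_of_not_can μp rankW a' p w hc]
        exact uP_nonneg μp rankW hM a' p
  -- score increase
  have hscore : posScore rankW a + 1 ≤ posScore rankW a' := by
    set M := Finset.univ.filter (fun p => MatchedIn rankW a p) with hMdef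
    set M' := Finset.univ.filter (fun p => MatchedIn rankW a' p) with hM'def
    have hmM : m ∉ M := by simp [hMdef, hunm]
    have hmM' : m ∈ M' := by simp [hM'def, hmm']
    have hfwd : ∀ p ∈ M', p ≠ m → p ∈ M := by
      intro p hpM' hpm
      simp only [hM'def, Finset.mem_filter] at hpM'
      simp only [hMdef, Finset.mem_filter]
      exact ⟨Finset.mem_univ _, hmb p hpm hpM'.2⟩
    have hsum_eq : ∀ s : Finset (Fin n), m ∉ s →
        (∑ p ∈ s, (n - (better rankW (a' p) p).card))
          = ∑ p ∈ s, (n - (better rankW (a p) p).card) := by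
      intro s hms
      refine Finset.sum_congr rfl (fun p hps => ?_)
      rw [hup p (fun h => hms (h ▸ hps))]
    by_cases hk : ∃ k, MatchedIn rankW a k ∧ a k = ws
    · obtain ⟨k, hkmat, hkws⟩ := hk
      have hkm : k ≠ m := fun h => hunm (h ▸ hkmat)
      have hkM : k ∈ M := by simp [hMdef, hkmat]
      have hrk : rankW ws k < rankW ws m := by
        rcases lt_trichotomy (rankW ws k) (rankW ws m) with h | h | h
        · exact h
        · exact absurd (hM.2.2 ws h) hkm
        · exact absurd hkws (hcan k ((mem_better_iff rankW).mpr h) hkm)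
      have hkM' : k ∉ M' := by
        simp only [hM'def, Finset.mem_filter, Finset.mem_univ, true_and]
        intro h
        have hm_mem : m ∈ better rankW (a' k) k := by
          rw [hup k hkm, hkws]
          exact (mem_better_iff rankW).mpr hrk
        have := h m hm_mem
        rw [ham', hup k hkm, hkws] at this
        exact this rfl
      have hMeq : M' = insert m (M.erase k) := by
        ext p
        simp only [Finset.mem_insert, Finset.mem_erase]
        constructor
        · intro hpM'
          rcases eq_or_ne p m with rfl | hpm
          · exact Or.inl rfl
          · refine Or.inr ⟨?_, hfwd p hpM' hpm⟩
            rintro rfl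
            exact hkM' hpM'
        · rintro (rfl | ⟨hpk, hpM⟩)
          · exact hmM'
          · have hpm : p ≠ m := fun h => hmM (h ▸ hpM)
            have hpmat : MatchedIn rankW a p := by
              simpa [hMdef] using hpM
            simp only [hM'def, Finset.mem_filter, Finset.mem_univ, true_and]
            intro j hj
            rw [hup p hpm] at hj ⊢
            rcases eq_or_ne j m with rfl | hjm
            · rw [ham']
              intro hws
              exact hpk (matched_unique μp rankW hM hpmat hkmat (hws.symm.trans hkws.symm))
            · rw [hup j hjm]
              exact hpmat j hj
      have hcard : (better rankW ws m).card + 1 ≤ (better rankW ws k).card := by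
        have hsub : insert m (better rankW ws m) ⊆ better rankW ws k := by
          intro j hj
          rcases Finset.mem_insert.mp hj with rfl | hj'
          · exact (mem_better_iff rankW).mpr hrk
          · exact (mem_better_iff rankW).mpr
              (lt_trans hrk ((mem_better_iff rankW).mp hj'))
        have := Finset.card_le_card hsub
        rwa [Finset.card_insert_of_notMem (notMem_better_self rankW ws m)] at this
      have hbk_le : (better rankW ws k).card ≤ n := card_better_le rankW ws k
      have e1 : posScore rankW a' = (n - (better rankW ws m).card)
          + ∑ p ∈ M.erase k, (n - (better rankW (a p) p).card) := by
        unfold posScore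
        rw [← hM'def, hMeq, Finset.sum_insert (fun h => hmM (Finset.mem_of_mem_erase h))]
        rw [hsum_eq (M.erase k) (fun h => hmM (Finset.mem_of_mem_erase h))]
        rw [ham']
      have e2 : posScore rankW a = (n - (better rankW ws k).card)
          + ∑ p ∈ M.erase k, (n - (better rankW (a p) p).card) := by
        unfold posScore
        rw [← hMdef, ← Finset.add_sum_erase M _ hkM, hkws]
      omega
    · push_neg at hk
      have hMeq : M' = insert m M := by
        ext p
        simp only [Finset.mem_insert]
        constructor
        · intro hpM'
          rcases eq_or_ne p m with rfl | hpm
          · exact Or.inl rfl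
          · exact Or.inr (hfwd p hpM' hpm)
        · rintro (rfl | hpM)
          · exact hmM'
          · have hpm : p ≠ m := fun h => hmM (h ▸ hpM)
            have hpmat : MatchedIn rankW a p := by
              simpa [hMdef] using hpM
            simp only [hM'def, Finset.mem_filter, Finset.mem_univ, true_and]
            intro j hj
            rw [hup p hpm] at hj ⊢
            rcases eq_or_ne j m with rfl | hjm
            · rw [ham']
              intro hws
              exact hk p hpmat hws.symm
            · rw [hup j hjm]
              exact hpmat j hj
      have hcm : (better rankW ws m).card < n := card_better_lt rankW ws m
      have e1 : posScore rankW a' = (n - (better rankW ws m).card)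
          + ∑ p ∈ M, (n - (better rankW (a p) p).card) := by
        unfold posScore
        rw [← hM'def, hMeq, Finset.sum_insert hmM, hsum_eq M hmM, ham']
      have e2 : posScore rankW a = ∑ p ∈ M, (n - (better rankW (a p) p).card) := by
        unfold posScore
        rw [← hMdef]
      omega
  exact ⟨a', hup, himp, hgood', hscore⟩

end Steps


section Phases

variable (μp rankW : Fin n → Fin n → ℝ)

/-- Phase 1: reach a good state. -/
lemma phase1 (hM : MarketHyp μp rankW) :
    ∀ K : ℕ, ∀ a : Fin n → Fin n, n * n ≤ lw μp a + K →
    ∃ (L : ℕ) (path : ℕ → Fin n → Fin n), L ≤ K ∧ path 0 = a ∧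
      (∀ ℓ < L, ∃ i : Fin n,
        (∀ j : Fin n, j ≠ i → path (ℓ+1) j = path ℓ j) ∧
        uP μp rankW (path ℓ) i < uP μp rankW (path (ℓ+1)) i) ∧
      GoodState μp rankW (path L) := by
  intro K
  induction K with
  | zero =>
    intro a hK
    by_cases hg : GoodState μp rankW a
    · exact ⟨0, fun _ => a, le_refl 0, rfl, fun ℓ h => absurd h (Nat.not_lt_zero ℓ), hg⟩
    · exfalso
      unfold GoodState at hg
      push_neg at hg
      obtain ⟨m, hmat, hnbr⟩ := hg
      obtain ⟨a', -, -, hlw⟩ := step1 μp rankW hM a m hmat hnbr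
      have := lw_le μp a'
      omega
  | succ K ih =>
    intro a hK
    by_cases hg : GoodState μp rankW a
    · exact ⟨0, fun _ => a, Nat.zero_le _, rfl, fun ℓ h => absurd h (Nat.not_lt_zero ℓ), hg⟩
    · unfold GoodState at hg
      push_neg at hg
      obtain ⟨m, hmat, hnbr⟩ := hg
      obtain ⟨a', hupd, himp, hlw⟩ := step1 μp rankW hM a m hmat hnbr
      obtain ⟨L, path', hL, h0, hsteps, hgood⟩ := ih a' (by omega)
      refine ⟨L + 1, fun ℓ => match ℓ with | 0 => a | Nat.succ k => path' k,
        by omega, rfl, ?_, hgood⟩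
      intro ℓ hℓ
      match ℓ with
      | 0 =>
        refine ⟨m, ?_, ?_⟩
        · intro j hj
          show path' 0 j = a j
          rw [h0]
          exact hupd j hj
        · show uP μp rankW a m < uP μp rankW (path' 0) m
          rw [h0]
          exact himp
      | Nat.succ k =>
        exact hsteps k (by omega)

/-- Phase 2: from a good state, reach a pure Nash equilibrium. -/
lemma phase2 (hM : MarketHyp μp rankW) :
    ∀ K : ℕ, ∀ a : Fin n → Fin n, GoodState μp rankW a → n * n ≤ posScore rankW a + K →
    ∃ (L : ℕ) (path : ℕ → Fin n → Fin n), L ≤ K ∧ path 0 = a ∧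
      (∀ ℓ < L, ∃ i : Fin n,
        (∀ j : Fin n, j ≠ i → path (ℓ+1) j = path ℓ j) ∧
        uP μp rankW (path ℓ) i < uP μp rankW (path (ℓ+1)) i) ∧
      IsPureNEAction μp rankW (path L) := by
  intro K
  induction K with
  | zero =>
    intro a hgood hK
    by_cases hne : IsPureNEAction μp rankW a
    · exact ⟨0, fun _ => a, le_refl 0, rfl, fun ℓ h => absurd h (Nat.not_lt_zero ℓ), hne⟩
    · exfalso
      unfold IsPureNEAction at hne
      push_neg at hne
      obtain ⟨m, hnbr⟩ := hne
      have hunm : ¬ MatchedIn rankW a m := fun h => hnbr (hgood m h)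
      obtain ⟨a', -, -, -, hsc⟩ := step2 μp rankW hM a m hgood hunm hnbr
      have := posScore_le rankW a'
      omega
  | succ K ih =>
    intro a hgood hK
    by_cases hne : IsPureNEAction μp rankW a
    · exact ⟨0, fun _ => a, Nat.zero_le _, rfl, fun ℓ h => absurd h (Nat.not_lt_zero ℓ), hne⟩
    · unfold IsPureNEAction at hne
      push_neg at hne
      obtain ⟨m, hnbr⟩ := hne
      have hunm : ¬ MatchedIn rankW a m := fun h => hnbr (hgood m h)
      obtain ⟨a', hupd, himp, hgood', hsc⟩ := step2 μp rankW hM a m hgood hunm hnbr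
      obtain ⟨L, path', hL, h0, hsteps, hfin⟩ := ih a' hgood' (by omega)
      refine ⟨L + 1, fun ℓ => match ℓ with | 0 => a | Nat.succ k => path' k,
        by omega, rfl, ?_, hfin⟩
      intro ℓ hℓ
      match ℓ with
      | 0 =>
        refine ⟨m, ?_, ?_⟩
        · intro j hj
          show path' 0 j = a j
          rw [h0]
          exact hupd j hj
        · show uP μp rankW a m < uP μp rankW (path' 0) m
          rw [h0]
          exact himp
      | Nat.succ k =>
        exact hsteps k (by omega)

end Phases


/-- the stable matching game is weakly acyclic: from every pure strategy
profile there is a better-response path of length at most `|M||W| + |M|²` ending at a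
pure Nash equilibrium. -/
theorem weakly_acyclic {n : ℕ} (μp rankW : Fin n → Fin n → ℝ)
    (hM : MarketHyp μp rankW) (a0 : Fin n → Fin n) :
    ∃ (L : ℕ) (path : ℕ → Fin n → Fin n),
      L ≤ n * n + n * n ∧ path 0 = a0 ∧
      (∀ ℓ < L, ∃ i : Fin n,
        (∀ j : Fin n, j ≠ i → path (ℓ+1) j = path ℓ j) ∧
        uP μp rankW (path ℓ) i < uP μp rankW (path (ℓ+1)) i) ∧
      IsPureNEAction μp rankW (path L) := by
  obtain ⟨L₁, p₁, hL₁, h01, hs1, hgood⟩ :=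
    phase1 μp rankW hM (n * n) a0 (Nat.le_add_left _ _)
  obtain ⟨L₂, p₂, hL₂, h02, hs2, hfin⟩ :=
    phase2 μp rankW hM (n * n) (p₁ L₁) hgood (Nat.le_add_left _ _)
  refine ⟨L₁ + L₂, fun ℓ => if ℓ < L₁ then p₁ ℓ else p₂ (ℓ - L₁), by omega, ?_, ?_, ?_⟩
  · by_cases h : 0 < L₁
    · simp only [if_pos h]
      exact h01
    · have hL0 : L₁ = 0 := by omega
      simp only [if_neg h]
      rw [hL0] at h02 ⊢
      rw [h02, ← hL0]  -- p₂ (0 - 0) = p₂ 0 = p₁ L₁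
      rw [hL0, ← h01]
  · intro ℓ hℓ
    by_cases h1 : ℓ < L₁
    · obtain ⟨i, hmov, himp⟩ := hs1 ℓ h1
      have hnext : (if ℓ + 1 < L₁ then p₁ (ℓ+1) else p₂ (ℓ + 1 - L₁)) = p₁ (ℓ+1) := by
        by_cases h2 : ℓ + 1 < L₁
        · rw [if_pos h2]
        · have he : ℓ + 1 = L₁ := by omega
          rw [if_neg h2, he, Nat.sub_self, h02]
      refine ⟨i, ?_, ?_⟩
      · intro j hj
        simp only [hnext, if_pos h1]
        exact hmov j hj
      · simp only [hnext, if_pos h1]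
        exact himp
    · have h1' : L₁ ≤ ℓ := Nat.le_of_not_lt h1
      obtain ⟨i, hmov, himp⟩ := hs2 (ℓ - L₁) (by omega)
      have hcur : (if ℓ < L₁ then p₁ ℓ else p₂ (ℓ - L₁)) = p₂ (ℓ - L₁) := if_neg h1
      have hnext : (if ℓ + 1 < L₁ then p₁ (ℓ+1) else p₂ (ℓ + 1 - L₁)) = p₂ (ℓ - L₁ + 1) := by
        have he : ℓ + 1 - L₁ = ℓ - L₁ + 1 := by omega
        rw [if_neg (by omega : ¬ ℓ + 1 < L₁), he]
      refine ⟨i, ?_, ?_⟩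
      · intro j hj
        simp only [hcur, hnext]
        exact hmov j hj
      · simp only [hcur, hnext]
        exact himp
  · have hfin' : (if L₁ + L₂ < L₁ then p₁ (L₁ + L₂) else p₂ (L₁ + L₂ - L₁)) = p₂ L₂ := by
      have he : L₁ + L₂ - L₁ = L₂ := by omega
      rw [if_neg (by omega : ¬ L₁ + L₂ < L₁), he]
    simp only [hfin']
    exact hfin


end SM
end

section
/- Every pure Nash equilibrium of the stable matching game is strict: if α* is a pure Nash equilibrium, then for every man m and every pure strategy α_m ≠ α*_m, u_m(α_m, α*_{−m}) < u_m(α*_m, α*_{−m}). -/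
open Finset Real MeasureTheory

namespace SM

variable {n : ℕ}

lemma uP_eq (μp rankW : Fin n → Fin n → ℝ) (a : Fin n → Fin n) (m : Fin n) :
    uP μp rankW a m =
      if ∃ k ∈ better rankW (a m) m, a k = a m then 0 else μp m (a m) := by
  unfold uP uu
  rw [Finset.sum_eq_single (a m)]
  · have hp : pureProfile a m (a m) = 1 := if_pos rfl
    rw [hp, mul_one]
    unfold vv pureProfile
    split_ifs with h
    · obtain ⟨k, hk, hak⟩ := h
      rw [Finset.prod_eq_zero hk]
      · ring
      · simp [hak]
    · rw [Finset.prod_eq_one, mul_one]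
      intro k hk
      have hne : a m ≠ a k := fun e => h ⟨k, hk, e.symm⟩
      simp [hne]
  · intro w _ hw
    simp [pureProfile, hw]
  · simp

lemma notMem_better (rankW : Fin n → Fin n → ℝ) (w m : Fin n) :
    m ∉ better rankW w m := by
  simp [better]

lemma uP_update_eq (μp rankW : Fin n → Fin n → ℝ) (a : Fin n → Fin n) (m w : Fin n) :
    uP μp rankW (Function.update a m w) m =
      if ∃ k ∈ better rankW w m, a k = w then 0 else μp m w := by
  rw [uP_eq]
  have hm : Function.update a m w m = w := Function.update_self m w a
  rw [hm]
  congr 1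
  apply propext
  constructor
  · rintro ⟨k, hk, hak⟩
    have hkm : k ≠ m := fun e => notMem_better rankW w m (e ▸ hk)
    exact ⟨k, hk, by rwa [Function.update_of_ne hkm] at hak⟩
  · rintro ⟨k, hk, hak⟩
    have hkm : k ≠ m := fun e => notMem_better rankW w m (e ▸ hk)
    exact ⟨k, hk, by rwa [Function.update_of_ne hkm]⟩

/-- every pure Nash equilibrium of the stable matching game is strict. -/
theorem pure_NE_strict {n : ℕ} (μp rankW : Fin n → Fin n → ℝ)
    (hM : MarketHyp μp rankW)
    (a : Fin n → Fin n) (hNE : IsPureNEAction μp rankW a) :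
    ∀ m w : Fin n, w ≠ a m →
      uP μp rankW (Function.update a m w) m < uP μp rankW a m := by
  intro m w hw
  have hle : ∀ w', uP μp rankW (Function.update a m w') m ≤ uP μp rankW a m := hNE m
  have hpos : ∀ m' w', 0 < μp m' w' := fun m' w' => (hM.1 m' w').1
  by_cases hmatch : ∃ k ∈ better rankW (a m) m, a k = a m
  · -- m unmatched: payoff 0; show every deviation also 0 leads to contradiction
    have hU : uP μp rankW a m = 0 := by rw [uP_eq, if_pos hmatch]
    exfalso
    have hblock : ∀ w' : Fin n, ∃ k, k ∈ better rankW w' m ∧ a k = w' := by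
      intro w'
      by_contra hc
      push_neg at hc
      have := hle w'
      rw [uP_update_eq, hU] at this
      rw [if_neg (by push_neg; exact hc)] at this
      exact absurd this (not_le.mpr (hpos m w'))
    choose f hf1 hf2 using hblock
    have hinj : Function.Injective f := by
      intro w1 w2 he
      rw [← hf2 w1, ← hf2 w2, he]
    have hsurj : Function.Surjective f := Finite.surjective_of_injective hinj
    obtain ⟨w0, hw0⟩ := hsurj m
    have := hf1 w0
    rw [hw0] at this
    exact notMem_better rankW w0 m this
  · -- m matched: payoff μp m (a m) > 0
    have hU : uP μp rankW a m = μp m (a m) := by rw [uP_eq, if_neg hmatch]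
    rw [hU, uP_update_eq]
    split_ifs with h
    · exact hpos m (a m)
    · have hle' := hle w
      rw [hU, uP_update_eq, if_neg h] at hle'
      exact lt_of_le_of_ne hle' (hM.2.1 m w (a m) hw)

end SM
end
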